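/- Let N, m, i be integers with m ≥ 2 even, 1 ≤ i ≤ N and N ≥ m+1. Then, in ℚ, C(i−1, m) − C(N−i, m) = (1/2) · ∑_{k=1}^{m−1} (−1)^{k+1} · C(N−m−1+k, k) · (C(i−1, m−k) − C(N−i, m−k)). Equivalently, writing f_i(t) = t^{i−1} − t^{N−i}, the normalized derivative f_i^{(m)}(1)/m! with m even is the stated linear combination (with coefficients independent of i) of the normalized odd-order derivatives f_i^{(m−k)}(1)/(m−k)!. -/

import Mathlib

open PowerSeries Finset

lemma coeff_one_add_X_pow' (A j : ℕ) :
    (PowerSeries.coeff (R := ℚ) j) ((1 + PowerSeries.X) ^ A) = (A.choose j : ℚ) := by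
  have hp : (1 + PowerSeries.X : ℚ⟦X⟧) = ((1 + Polynomial.X : Polynomial ℚ) : ℚ⟦X⟧) := by
    simp
  rw [hp, ← Polynomial.coe_pow, Polynomial.coeff_coe, Polynomial.coeff_one_add_X_pow]

lemma coeff_one_sub_X_pow (A j : ℕ) :
    (PowerSeries.coeff (R := ℚ) j) ((1 - PowerSeries.X) ^ A) = (-1) ^ j * (A.choose j : ℚ) := by
  have h : (1 - PowerSeries.X : ℚ⟦X⟧) ^ A = rescale (-1 : ℚ) ((1 + PowerSeries.X) ^ A) := by
    rw [map_pow, map_add, map_one, rescale_neg_one_X, sub_eq_add_neg]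
  rw [h, coeff_rescale, coeff_one_add_X_pow' A j]

lemma sum_eq_coeff (c A m : ℕ) :
    ∑ j ∈ range (m + 1), (-1 : ℚ) ^ j * (A.choose j : ℚ) * ((c + (m - j)).choose c : ℚ)
      = (PowerSeries.coeff (R := ℚ) m) ((1 - PowerSeries.X) ^ A * (invOneSubPow ℚ (c + 1)).val) := by
  rw [PowerSeries.coeff_mul, Finset.Nat.sum_antidiagonal_eq_sum_range_succ_mk]
  refine Finset.sum_congr rfl fun j _ => ?_
  rw [coeff_one_sub_X_pow, invOneSubPow_val_succ_eq_mk_add_choose, PowerSeries.coeff_mk]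

lemma main_sum (a b m : ℕ) (hme : Even m) (hab : m ≤ a + b) :
    ∑ j ∈ range (m + 1), (-1 : ℚ) ^ j * (a.choose j : ℚ) * ((a + b - m + (m - j)).choose (a + b - m) : ℚ)
      = (b.choose m : ℚ) := by
  set c := a + b - m with hc
  rw [sum_eq_coeff]
  have hunit : (1 - PowerSeries.X : ℚ⟦X⟧) ^ (c + 1) * (invOneSubPow ℚ (c + 1)).val = 1 := by
    rw [← invOneSubPow_inv_eq_one_sub_pow]
    exact (invOneSubPow ℚ (c + 1)).inv_val
  rcases le_or_gt m b with hbm | hbm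
  · -- b ≥ m : c + 1 = a + (b - m + 1)
    set e := b - m with he
    have h1 : c + 1 = a + (e + 1) := by omega
    have h2 : (1 - PowerSeries.X : ℚ⟦X⟧) ^ a * (invOneSubPow ℚ (c + 1)).val
        = (invOneSubPow ℚ (e + 1)).val := by
      have hu2 : (1 - PowerSeries.X : ℚ⟦X⟧) ^ (e + 1) * (invOneSubPow ℚ (e + 1)).val = 1 := by
        rw [← invOneSubPow_inv_eq_one_sub_pow]
        exact (invOneSubPow ℚ (e + 1)).inv_val
      calc (1 - PowerSeries.X : ℚ⟦X⟧) ^ a * (invOneSubPow ℚ (c + 1)).val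
          = ((1 - PowerSeries.X : ℚ⟦X⟧) ^ a * (invOneSubPow ℚ (c + 1)).val)
            * ((1 - PowerSeries.X : ℚ⟦X⟧) ^ (e + 1) * (invOneSubPow ℚ (e + 1)).val) := by
            rw [hu2, mul_one]
        _ = ((1 - PowerSeries.X : ℚ⟦X⟧) ^ (c + 1) * (invOneSubPow ℚ (c + 1)).val)
            * (invOneSubPow ℚ (e + 1)).val := by
            rw [h1, pow_add]; ring
        _ = (invOneSubPow ℚ (e + 1)).val := by rw [hunit, one_mul]
    rw [h2, invOneSubPow_val_succ_eq_mk_add_choose, PowerSeries.coeff_mk]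
    have : b.choose m = (e + m).choose e := by
      rw [show e + m = b by omega]
      rw [← Nat.choose_symm hbm, show b - m = e by omega]
    rw [this]
  · -- b < m : a = c + 1 + d with d = m - 1 - b
    set d := m - 1 - b with hd
    have h1 : a = (c + 1) + d := by omega
    have h2 : (1 - PowerSeries.X : ℚ⟦X⟧) ^ a * (invOneSubPow ℚ (c + 1)).val
        = (1 - PowerSeries.X : ℚ⟦X⟧) ^ d := by
      rw [h1, pow_add, mul_assoc, mul_comm ((1 - PowerSeries.X : ℚ⟦X⟧) ^ d), ← mul_assoc,
        hunit, one_mul]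
    rw [h2, coeff_one_sub_X_pow, hme.neg_one_pow, one_mul,
      Nat.choose_eq_zero_of_lt (by omega), Nat.choose_eq_zero_of_lt (by omega)]

lemma combined (a b m : ℕ) (hm2 : 2 ≤ m) (hme : Even m) (hab : m ≤ a + b) :
    (a.choose m : ℚ) - (b.choose m : ℚ)
      = (1 / 2 : ℚ) * ∑ k ∈ Finset.Icc 1 (m - 1),
          (-1 : ℚ) ^ (k + 1) * ((a + b - m + k).choose k : ℚ) *
            ((a.choose (m - k) : ℚ) - (b.choose (m - k) : ℚ)) := by
  obtain ⟨c, hc⟩ : ∃ c, a + b - m = c := ⟨_, rfl⟩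
  rw [hc]
  have hA := main_sum a b m hme hab
  have hB := main_sum b a m hme (by omega)
  rw [hc] at hA
  rw [show b + a - m = c by omega] at hB
  have hsgn : ∀ k, k ≤ m → (-1 : ℚ) ^ (m - k) = (-1) ^ k := by
    intro k hk
    have hm0 : m % 2 = 0 := Nat.even_iff.mp hme
    rcases Nat.even_or_odd k with h | h
    · have h2 : Even (m - k) := Nat.even_iff.mpr (by have := Nat.even_iff.mp h; omega)
      rw [h2.neg_one_pow, h.neg_one_pow]
    · have h2 : Odd (m - k) := Nat.odd_iff.mpr (by have := Nat.odd_iff.mp h; omega)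
      rw [h2.neg_one_pow, h.neg_one_pow]
  have hD : ∑ j ∈ range (m + 1),
      (-1 : ℚ) ^ j * ((c + (m - j)).choose c : ℚ) * ((a.choose j : ℚ) - (b.choose j : ℚ))
      = (b.choose m : ℚ) - (a.choose m : ℚ) := by
    rw [← hA, ← hB, ← Finset.sum_sub_distrib]
    exact Finset.sum_congr rfl fun j _ => by ring
  have hsplit : ∀ f : ℕ → ℚ, ∑ j ∈ range (m + 1), f j
      = f 0 + (∑ j ∈ Finset.Icc 1 (m - 1), f j) + f m := by
    intro f
    rw [Finset.sum_range_succ, Finset.range_eq_Ico,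
      Finset.sum_eq_sum_Ico_succ_bot (by omega : 0 < m) f,
      show Finset.Icc 1 (m - 1) = Finset.Ico 1 m by
        ext x; simp only [Finset.mem_Icc, Finset.mem_Ico]; omega]
  rw [hsplit] at hD
  simp only [pow_zero, Nat.choose_zero_right, Nat.cast_one, sub_self, mul_zero, zero_add,
    Nat.sub_self, Nat.add_zero, Nat.choose_self, Nat.cast_one, hme.neg_one_pow, one_mul,
    mul_one] at hD
  have hT : ∑ k ∈ Finset.Icc 1 (m - 1),
      (-1 : ℚ) ^ (k + 1) * ((c + k).choose k : ℚ) *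
        ((a.choose (m - k) : ℚ) - (b.choose (m - k) : ℚ))
      = -∑ j ∈ Finset.Icc 1 (m - 1),
          (-1 : ℚ) ^ j * ((c + (m - j)).choose c : ℚ) * ((a.choose j : ℚ) - (b.choose j : ℚ)) := by
    rw [← Finset.sum_neg_distrib]
    refine Finset.sum_nbij' (fun k => m - k) (fun k => m - k) ?_ ?_ ?_ ?_ ?_
    · intro k hk; simp only [Finset.mem_Icc] at *; omega
    · intro k hk; simp only [Finset.mem_Icc] at *; omega
    · intro k hk; simp only [Finset.mem_Icc] at *; omega
    · intro k hk; simp only [Finset.mem_Icc] at *; omega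
    · intro k hk
      simp only [Finset.mem_Icc] at hk
      have h1 : m - (m - k) = k := by omega
      have h2 : ((c + k).choose k : ℚ) = ((c + k).choose c : ℚ) := by
        rw [show (c + k).choose c = (c + k).choose k by
          rw [← Nat.choose_symm (by omega : k ≤ c + k)]; congr 1; omega]
      rw [h1, h2, hsgn k (by omega), pow_succ]
      ring
  rw [hT]
  linarith [hD]


/-- For even `m ≥ 2`, the even-order normalized Taylor coefficient
`f_i^{(m)}(1)/m! = C(i−1,m) − C(N−i,m)` is the stated linear combination of the
lower-order ones:
`C(i−1,m) − C(N−i,m) = (1/2) ∑_{k=1}^{m−1} (−1)^{k+1} C(N−m−1+k,k)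
  (C(i−1,m−k) − C(N−i,m−k))` in ℚ. -/
theorem even_coeff_linear_combination (N m i : ℕ)
    (hm2 : 2 ≤ m) (hme : Even m) (hi1 : 1 ≤ i) (hiN : i ≤ N) (hNm : m + 1 ≤ N) :
    (Nat.choose (i - 1) m : ℚ) - (Nat.choose (N - i) m : ℚ)
      = (1 / 2 : ℚ) * ∑ k ∈ Finset.Icc 1 (m - 1),
          (-1 : ℚ) ^ (k + 1) * (Nat.choose (N - m - 1 + k) k : ℚ) *
            ((Nat.choose (i - 1) (m - k) : ℚ) - (Nat.choose (N - i) (m - k) : ℚ)) := by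
  have h := combined (i - 1) (N - i) m hm2 hme (by omega)
  rw [show i - 1 + (N - i) - m = N - m - 1 by omega] at h
  exact h
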